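/- Let β, λ > 0, x > 0 and 0 ≤ e ≤ x. Let p : (0,x] × [0,2π] → [0,∞) be measurable, integrable against t dt dθ on (e,x]×[0,2π], and satisfy e^{−βx} e^{−βt} ≤ p(t,θ) ≤ exp(−βx − βt + (t/2)β(1 + cos θ)) for all t ∈ (0,x] and θ ∈ [0,2π]. Define G[p] = exp(−βx − λπe² − λ e^{βx} ∫₀^{2π} ∫ₑ^x p(t,θ) · t dt dθ). Then exp(−βx − λπe² − (2πλ/(3β))(F(x) − F(e))) ≤ G[p] ≤ exp(−βx − λπe² − (2πλ/β²)(F₁(e) − F₁(x))), where F₁(z) = (1 + βz)e^{−βz} and F(r) = r e^{−βr/2}( βr·I₀(βr/2) + (βr+2)·I₁(βr/2) ), with I₀(a) = (1/π)∫₀^π e^{a cos u} du and I₁(a) = (1/π)∫₀^π e^{a cos u} cos u du. -/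

import Mathlib

open MeasureTheory Real

/-- Modified Bessel function of the first kind of order 0 (integral form). -/
noncomputable def besselI0 (a : ℝ) : ℝ :=
  (1 / π) * ∫ u in (0:ℝ)..π, Real.exp (a * Real.cos u)

/-- Modified Bessel function of the first kind of order 1 (integral form). -/
noncomputable def besselI1 (a : ℝ) : ℝ :=
  (1 / π) * ∫ u in (0:ℝ)..π, Real.exp (a * Real.cos u) * Real.cos u

/-- `F₁(z) = (1 + βz)e^{−βz}`. -/
noncomputable def funF1 (β z : ℝ) : ℝ := (1 + β * z) * Real.exp (-β * z)

/-- `F(r) = r e^{−βr/2}(βr·I₀(βr/2) + (βr+2)·I₁(βr/2))`. -/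
noncomputable def funF (β r : ℝ) : ℝ :=
  r * Real.exp (-β * r / 2) *
    (β * r * besselI0 (β * r / 2) + (β * r + 2) * besselI1 (β * r / 2))


-- FTC for F1: ∫ t in e..x, exp(-βx)exp(-βt)*t
lemma ftc1 (β e x : ℝ) (hβ : 0 < β) :
    ∫ t in e..x, Real.exp (-β * t) * t
      = ((1 + β * e) * Real.exp (-β * e) - (1 + β * x) * Real.exp (-β * x)) / β ^ 2 := by
  have h : ∀ t ∈ Set.uIcc e x, HasDerivAt (fun z => -((1 + β * z) * Real.exp (-β * z)) / β ^ 2)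
      (Real.exp (-β * t) * t) t := by
    intro t _
    have h1 : HasDerivAt (fun z : ℝ => -β * z) (-β) t := by
      simpa using (hasDerivAt_id t).const_mul (-β)
    have h2 : HasDerivAt (fun z : ℝ => Real.exp (-β * z)) (Real.exp (-β * t) * (-β)) t :=
      (Real.hasDerivAt_exp _).comp t h1
    have h3 : HasDerivAt (fun z : ℝ => 1 + β * z) β t := by
      simpa using ((hasDerivAt_id t).const_mul β).const_add 1
    have h4 := (h3.mul h2)
    have h5 := ((h4.neg).div_const (β ^ 2))
    refine h5.congr_deriv ?_
    field_simp
    ring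
  have := intervalIntegral.integral_eq_sub_of_hasDerivAt h (by
    apply Continuous.intervalIntegrable
    fun_prop)
  rw [this]
  field_simp
  ring

noncomputable def funE (β r u : ℝ) : ℝ := Real.exp (β * r / 2 * (Real.cos u - 1))
noncomputable def funG (β r u : ℝ) : ℝ := r * (β * r + (β * r + 2) * Real.cos u) * funE β r u
noncomputable def funHu (β r u : ℝ) : ℝ :=
  (2 + β * r) * (Real.cos u - β * r / 2 * (Real.sin u) ^ 2) * funE β r u

lemma hasDerivAt_funG (β u : ℝ) (r : ℝ) :
    HasDerivAt (fun r => funG β r u) (3 * β * r * funE β r u + funHu β r u) r := by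
  have h1 : HasDerivAt (fun r : ℝ => r * (β * r + (β * r + 2) * Real.cos u))
      (β * r + (β * r + 2) * Real.cos u + r * (β + β * Real.cos u)) r := by
    have ha : HasDerivAt (fun r : ℝ => β * r + (β * r + 2) * Real.cos u)
        (β + β * Real.cos u) r := by
      have : HasDerivAt (fun r : ℝ => β * r + (β * r + 2) * Real.cos u)
          (β + β * Real.cos u) r := by
        exact (((hasDerivAt_id r).const_mul β).add
          ((((hasDerivAt_id r).const_mul β).add_const 2).mul_const (Real.cos u))).congr_deriv (by ring)
      exact this
    exact ((hasDerivAt_id r).mul ha).congr_deriv (by simp)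
  have h2 : HasDerivAt (fun r : ℝ => funE β r u)
      (funE β r u * (β / 2 * (Real.cos u - 1))) r := by
    have hl : HasDerivAt (fun r : ℝ => β * r / 2 * (Real.cos u - 1))
        (β / 2 * (Real.cos u - 1)) r := by
      have : (fun r : ℝ => β * r / 2 * (Real.cos u - 1))
          = fun r : ℝ => (β / 2 * (Real.cos u - 1)) * r := by funext r; ring
      rw [this]
      simpa using (hasDerivAt_id r).const_mul (β / 2 * (Real.cos u - 1))
    exact (Real.hasDerivAt_exp _).comp r hl
  have h3 := h1.mul h2
  refine h3.congr_deriv ?_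
  have hs : (Real.sin u) ^ 2 = 1 - (Real.cos u) ^ 2 := by
    have := Real.sin_sq_add_cos_sq u; nlinarith
  simp only [funG, funHu, funE, hs]
  ring

lemma hasDerivAt_funH (β r : ℝ) (u : ℝ) :
    HasDerivAt (fun u => (2 + β * r) * Real.sin u * funE β r u) (funHu β r u) u := by
  have h2 : HasDerivAt (fun u : ℝ => funE β r u)
      (funE β r u * (β * r / 2 * (-Real.sin u))) u := by
    have hl : HasDerivAt (fun u : ℝ => β * r / 2 * (Real.cos u - 1))
        (β * r / 2 * (-Real.sin u)) u := by
      simpa using ((Real.hasDerivAt_cos u).sub_const 1).const_mul (β * r / 2)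
    exact (Real.hasDerivAt_exp _).comp u hl
  have h1 : HasDerivAt (fun u : ℝ => (2 + β * r) * Real.sin u)
      ((2 + β * r) * Real.cos u) u := (Real.hasDerivAt_sin u).const_mul (2 + β * r)
  have h3 := h1.mul h2
  refine h3.congr_deriv ?_
  simp only [funHu, funE]
  ring

lemma contE (β : ℝ) : Continuous (fun q : ℝ × ℝ => funE β q.1 q.2) := by
  unfold funE; fun_prop

lemma contHu (β : ℝ) : Continuous (fun q : ℝ × ℝ => funHu β q.1 q.2) := by
  unfold funHu funE; fun_prop

lemma intB (β u e x : ℝ) :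
    ∫ r in e..x, (3 * β * r * funE β r u + funHu β r u) = funG β x u - funG β e u := by
  apply intervalIntegral.integral_eq_sub_of_hasDerivAt
  · intro r _; exact hasDerivAt_funG β u r
  · apply Continuous.intervalIntegrable
    have h1 : Continuous fun r => funE β r u :=
      (contE β).comp₂ continuous_id continuous_const
    have h2 : Continuous fun r => funHu β r u :=
      (contHu β).comp₂ continuous_id continuous_const
    exact (((continuous_const.mul continuous_id).mul h1).add h2)

lemma intC (β r : ℝ) : ∫ u in (0:ℝ)..π, funHu β r u = 0 := by
  have := intervalIntegral.integral_eq_sub_of_hasDerivAt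
    (f := fun u => (2 + β * r) * Real.sin u * funE β r u)
    (a := 0) (b := π)
    (fun u _ => hasDerivAt_funH β r u)
    (by apply Continuous.intervalIntegrable
        exact (contHu β).comp₂ continuous_const continuous_id)
  rw [this]
  simp

-- Fubini for continuous functions on a rectangle
lemma swapCont {F : ℝ → ℝ → ℝ} (hF : Continuous (fun q : ℝ × ℝ => F q.1 q.2))
    {a b c d : ℝ} (hab : a ≤ b) (hcd : c ≤ d) :
    ∫ u in c..d, ∫ r in a..b, F r u = ∫ r in a..b, ∫ u in c..d, F r u := by
  have hint : Integrable (Function.uncurry (fun u r => F r u))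
      ((volume.restrict (Set.Ioc c d)).prod (volume.restrict (Set.Ioc a b))) := by
    rw [Measure.prod_restrict]
    have hc2 : Continuous (fun q : ℝ × ℝ => F q.2 q.1) :=
      hF.comp₂ continuous_snd continuous_fst
    have := (hc2.continuousOn.integrableOn_compact
      (K := Set.Icc c d ×ˢ Set.Icc a b) (isCompact_Icc.prod isCompact_Icc)
      (μ := volume))
    exact this.mono_set (Set.prod_mono Set.Ioc_subset_Icc_self Set.Ioc_subset_Icc_self)
  have := MeasureTheory.integral_integral_swap hint
  rw [intervalIntegral.integral_of_le hab, intervalIntegral.integral_of_le hcd]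
  simp only [intervalIntegral.integral_of_le hab, intervalIntegral.integral_of_le hcd]
  exact this

lemma piF (β r : ℝ) : π * funF β r = ∫ u in (0:ℝ)..π, funG β r u := by
  have hπ : (π:ℝ) ≠ 0 := Real.pi_ne_zero
  have hint0 : IntervalIntegrable (fun u => Real.exp (β * r / 2 * Real.cos u)) volume 0 π :=
    (by fun_prop : Continuous fun u => Real.exp (β * r / 2 * Real.cos u)).intervalIntegrable _ _
  have hint1 : IntervalIntegrable (fun u => Real.exp (β * r / 2 * Real.cos u) * Real.cos u)
      volume 0 π :=
    (by fun_prop : Continuous fun u =>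
      Real.exp (β * r / 2 * Real.cos u) * Real.cos u).intervalIntegrable _ _
  have key : ∫ u in (0:ℝ)..π, funG β r u
      = (r * Real.exp (-β * r / 2) * (β * r)) * (∫ u in (0:ℝ)..π, Real.exp (β * r / 2 * Real.cos u))
        + (r * Real.exp (-β * r / 2) * (β * r + 2)) *
          (∫ u in (0:ℝ)..π, Real.exp (β * r / 2 * Real.cos u) * Real.cos u) := by
    rw [← intervalIntegral.integral_const_mul, ← intervalIntegral.integral_const_mul,
      ← intervalIntegral.integral_add (hint0.const_mul _) (hint1.const_mul _)]
    apply intervalIntegral.integral_congr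
    intro u _
    simp only [funG, funE]
    rw [show β * r / 2 * (Real.cos u - 1) = -β * r / 2 + β * r / 2 * Real.cos u by ring,
      Real.exp_add]
    ring
  rw [key]
  simp only [funF, besselI0, besselI1]
  field_simp

lemma contf (β e x : ℝ) : Continuous (fun θ => ∫ t in e..x, funE β t θ * t) := by
  apply intervalIntegral.continuous_parametric_intervalIntegral_of_continuous'
  exact ((contE β).comp₂ continuous_snd continuous_fst).mul continuous_snd

lemma symmS (β e x : ℝ) :
    (∫ θ in (0:ℝ)..(2 * π), ∫ t in e..x, funE β t θ * t)
      = 2 * ∫ θ in (0:ℝ)..π, ∫ t in e..x, funE β t θ * t := by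
  have hc := contf β e x
  have h1 : IntervalIntegrable (fun θ => ∫ t in e..x, funE β t θ * t) volume 0 π :=
    hc.intervalIntegrable _ _
  have h2 : IntervalIntegrable (fun θ => ∫ t in e..x, funE β t θ * t) volume π (2 * π) :=
    hc.intervalIntegrable _ _
  rw [← intervalIntegral.integral_add_adjacent_intervals h1 h2]
  have h3 : (∫ θ in π..(2 * π), ∫ t in e..x, funE β t θ * t)
      = ∫ θ in (0:ℝ)..π, ∫ t in e..x, funE β t θ * t := by
    have := intervalIntegral.integral_comp_sub_left
      (a := (0:ℝ)) (b := π) (fun θ => ∫ t in e..x, funE β t θ * t) (2 * π)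
    simp only [sub_zero] at this
    rw [show (2 * π - π) = π by ring] at this
    rw [← this]
    apply intervalIntegral.integral_congr
    intro u _
    apply intervalIntegral.integral_congr
    intro t _
    simp [funE, Real.cos_two_pi_sub]
  rw [h3]; ring

lemma valS (β e x : ℝ) (hβ : 0 < β) (hex : e ≤ x) :
    (∫ θ in (0:ℝ)..(2 * π), ∫ t in e..x, funE β t θ * t)
      = 2 * π / (3 * β) * (funF β x - funF β e) := by
  have hGc : ∀ r, Continuous (fun u => funG β r u) := fun r =>
    (by unfold funG funE; fun_prop : Continuous (fun q : ℝ × ℝ => funG β q.1 q.2)).comp₂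
      continuous_const continuous_id
  have hcE : ∀ u, Continuous (fun t => funE β t u * t) := fun u =>
    (((contE β).comp₂ continuous_id continuous_const).mul continuous_id)
  have hcHu : ∀ u, Continuous (fun t => funHu β t u) := fun u =>
    (contHu β).comp₂ continuous_id continuous_const
  -- step: π (F x - F e) = 3β ∫u∫t funE*t
  have c1 : Continuous (fun u => ∫ t in e..x, funE β t u * t) := by
    apply intervalIntegral.continuous_parametric_intervalIntegral_of_continuous'
    exact ((contE β).comp₂ continuous_snd continuous_fst).mul continuous_snd
  have c2 : Continuous (fun u => ∫ t in e..x, funHu β t u) := by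
    apply intervalIntegral.continuous_parametric_intervalIntegral_of_continuous'
    exact (contHu β).comp₂ continuous_snd continuous_fst
  have key : π * funF β x - π * funF β e
      = 3 * β * ∫ u in (0:ℝ)..π, ∫ t in e..x, funE β t u * t := by
    rw [piF, piF]
    rw [← intervalIntegral.integral_sub ((hGc x).intervalIntegrable _ _)
      ((hGc e).intervalIntegrable _ _)]
    have e1 : (∫ u in (0:ℝ)..π, (funG β x u - funG β e u))
        = ∫ u in (0:ℝ)..π, ((3 * β * ∫ t in e..x, funE β t u * t)
            + ∫ t in e..x, funHu β t u) := by
      apply intervalIntegral.integral_congr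
      intro u _
      simp only []
      rw [← intB β u e x]
      rw [← intervalIntegral.integral_const_mul,
        ← intervalIntegral.integral_add (((hcE u).intervalIntegrable _ _).const_mul _)
          ((hcHu u).intervalIntegrable _ _)]
      apply intervalIntegral.integral_congr
      intro t _
      ring
    rw [e1]
    rw [intervalIntegral.integral_add (f := fun u => 3 * β * ∫ t in e..x, funE β t u * t)
      ((continuous_const.mul c1).intervalIntegrable _ _)
      (c2.intervalIntegrable _ _)]
    rw [intervalIntegral.integral_const_mul]
    have e2 : (∫ u in (0:ℝ)..π, ∫ t in e..x, funHu β t u) = 0 := by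
      rw [swapCont (contHu β) hex Real.pi_pos.le]
      simp [intC]
    rw [e2, add_zero]
  rw [symmS]
  have hβ' : (3 * β) ≠ 0 := by positivity
  field_simp at key ⊢
  linarith [key]

/-- Lemma 8 (bounds): if the joint LoS probability `p` lies between the
independent-blocking value and the maximally-correlated value, then
`G[p] = exp(−βx − λπe² − λe^{βx}∫₀^{2π}∫ₑ^x p t dt dθ)` is sandwiched between
the maximally-correlated lower bound and the independent-blocking upper
bound. -/
theorem stmt_9 (β lam x e : ℝ) (hβ : 0 < β) (hlam : 0 < lam) (hx : 0 < x)
    (he : 0 ≤ e) (hex : e ≤ x)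
    (p : ℝ → ℝ → ℝ)
    (hm : Measurable (Function.uncurry p))
    (hnn : ∀ t θ : ℝ, 0 ≤ p t θ)
    (hi : IntegrableOn (fun q : ℝ × ℝ => p q.1 q.2 * q.1)
      (Set.Ioc e x ×ˢ Set.Icc 0 (2 * π)))
    (hlb : ∀ t ∈ Set.Ioc (0:ℝ) x, ∀ θ ∈ Set.Icc (0:ℝ) (2 * π),
      Real.exp (-β * x) * Real.exp (-β * t) ≤ p t θ)
    (hub : ∀ t ∈ Set.Ioc (0:ℝ) x, ∀ θ ∈ Set.Icc (0:ℝ) (2 * π),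
      p t θ ≤ Real.exp (-β * x - β * t + t / 2 * β * (1 + Real.cos θ))) :
    Real.exp (-β * x - lam * π * e ^ 2
        - 2 * π * lam / (3 * β) * (funF β x - funF β e))
      ≤ Real.exp (-β * x - lam * π * e ^ 2
          - lam * Real.exp (β * x) * ∫ θ in (0:ℝ)..(2 * π), ∫ t in e..x, p t θ * t)
    ∧ Real.exp (-β * x - lam * π * e ^ 2
          - lam * Real.exp (β * x) * ∫ θ in (0:ℝ)..(2 * π), ∫ t in e..x, p t θ * t)
      ≤ Real.exp (-β * x - lam * π * e ^ 2
          - 2 * π * lam / β ^ 2 * (funF1 β e - funF1 β x)) := by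
  have h2π : (0:ℝ) ≤ 2 * π := by positivity
  set P : ℝ → ℝ := fun θ => ∫ t in e..x, p t θ * t with hP
  -- product integrability
  have hpi : Integrable (fun q : ℝ × ℝ => p q.1 q.2 * q.1)
      ((volume.restrict (Set.Ioc e x)).prod (volume.restrict (Set.Icc 0 (2 * π)))) := by
    rw [Measure.prod_restrict]
    rw [← Measure.volume_eq_prod]
    exact hi
  have haeslice : ∀ᵐ θ ∂(volume.restrict (Set.Icc 0 (2 * π))),
      IntegrableOn (fun t => p t θ * t) (Set.Ioc e x) volume := hpi.prod_left_ae
  have houter : Integrable P (volume.restrict (Set.Icc 0 (2 * π))) := by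
    have := hpi.integral_prod_right
    refine this.congr ?_
    filter_upwards with θ
    rw [hP]
    simp only [intervalIntegral.integral_of_le hex]
  have hPint : IntervalIntegrable P volume 0 (2 * π) := by
    rw [intervalIntegrable_iff_integrableOn_Ioc_of_le h2π]
    exact houter.mono_measure (Measure.restrict_mono Set.Ioc_subset_Icc_self le_rfl)
  -- bound functions
  set low : ℝ → ℝ := fun _ => ∫ t in e..x, (Real.exp (-β * x) * Real.exp (-β * t)) * t with hlow
  set ubf : ℝ → ℝ := fun θ =>
    ∫ t in e..x, Real.exp (-β * x - β * t + t / 2 * β * (1 + Real.cos θ)) * t with hubf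
  have hlowc : Continuous low := continuous_const
  have hubc : Continuous ubf := by
    apply intervalIntegral.continuous_parametric_intervalIntegral_of_continuous'
    fun_prop
  -- a.e. pointwise bounds
  have haelow : low ≤ᵐ[volume.restrict (Set.Icc 0 (2 * π))] P := by
    filter_upwards [haeslice, ae_restrict_mem measurableSet_Icc] with θ hslice hθ
    rw [hP, hlow]
    simp only
    rw [intervalIntegral.integral_of_le hex, intervalIntegral.integral_of_le hex]
    apply setIntegral_mono_on _ hslice measurableSet_Ioc
    · intro t ht
      have ht0 : t ∈ Set.Ioc (0:ℝ) x := ⟨lt_of_le_of_lt he ht.1, ht.2⟩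
      exact mul_le_mul_of_nonneg_right (hlb t ht0 θ hθ) ht0.1.le
    · exact (by fun_prop : Continuous fun t : ℝ =>
        (Real.exp (-β * x) * Real.exp (-β * t)) * t).integrableOn_Ioc
  have haeub : P ≤ᵐ[volume.restrict (Set.Icc 0 (2 * π))] ubf := by
    filter_upwards [haeslice, ae_restrict_mem measurableSet_Icc] with θ hslice hθ
    rw [hP, hubf]
    simp only
    rw [intervalIntegral.integral_of_le hex, intervalIntegral.integral_of_le hex]
    apply setIntegral_mono_on hslice _ measurableSet_Ioc
    · intro t ht
      have ht0 : t ∈ Set.Ioc (0:ℝ) x := ⟨lt_of_le_of_lt he ht.1, ht.2⟩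
      exact mul_le_mul_of_nonneg_right (hub t ht0 θ hθ) ht0.1.le
    · exact (by fun_prop : Continuous fun t : ℝ =>
        Real.exp (-β * x - β * t + t / 2 * β * (1 + Real.cos θ)) * t).integrableOn_Ioc
  -- integral bounds
  have hlowint : (∫ θ in (0:ℝ)..(2 * π), low θ) ≤ ∫ θ in (0:ℝ)..(2 * π), P θ :=
    intervalIntegral.integral_mono_ae_restrict h2π (hlowc.intervalIntegrable _ _) hPint haelow
  have hubint : (∫ θ in (0:ℝ)..(2 * π), P θ) ≤ ∫ θ in (0:ℝ)..(2 * π), ubf θ :=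
    intervalIntegral.integral_mono_ae_restrict h2π hPint (hubc.intervalIntegrable _ _) haeub
  -- value of lower integral
  have hlowval : (∫ θ in (0:ℝ)..(2 * π), low θ)
      = 2 * π * (Real.exp (-β * x) * ((funF1 β e - funF1 β x) / β ^ 2)) := by
    rw [hlow]
    rw [intervalIntegral.integral_const]
    have : (∫ t in e..x, (Real.exp (-β * x) * Real.exp (-β * t)) * t)
        = Real.exp (-β * x) * ∫ t in e..x, Real.exp (-β * t) * t := by
      rw [← intervalIntegral.integral_const_mul]
      apply intervalIntegral.integral_congr
      intro t _; ring
    rw [this, ftc1 β e x hβ]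
    simp only [funF1, smul_eq_mul]
    ring
  -- value of upper integral
  have hubval : (∫ θ in (0:ℝ)..(2 * π), ubf θ)
      = Real.exp (-β * x) * (2 * π / (3 * β) * (funF β x - funF β e)) := by
    have e1 : (∫ θ in (0:ℝ)..(2 * π), ubf θ)
        = Real.exp (-β * x) * ∫ θ in (0:ℝ)..(2 * π), ∫ t in e..x, funE β t θ * t := by
      rw [← intervalIntegral.integral_const_mul]
      apply intervalIntegral.integral_congr
      intro θ _
      rw [hubf]
      simp only
      rw [← intervalIntegral.integral_const_mul]
      apply intervalIntegral.integral_congr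
      intro t _
      simp only [funE]
      rw [show -β * x - β * t + t / 2 * β * (1 + Real.cos θ)
          = -β * x + β * t / 2 * (Real.cos θ - 1) by ring, Real.exp_add]
      ring
    rw [e1, valS β e x hβ hex]
  -- put together
  have hE : Real.exp (β * x) * Real.exp (-β * x) = 1 := by
    rw [← Real.exp_add]; simp
  have hSp1 : 2 * π * lam / β ^ 2 * (funF1 β e - funF1 β x)
      ≤ lam * Real.exp (β * x) * ∫ θ in (0:ℝ)..(2 * π), P θ := by
    have h := mul_le_mul_of_nonneg_left hlowint
      (le_of_lt (by positivity : 0 < lam * Real.exp (β * x)))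
    rw [hlowval] at h
    calc 2 * π * lam / β ^ 2 * (funF1 β e - funF1 β x)
        = lam * Real.exp (β * x) *
          (2 * π * (Real.exp (-β * x) * ((funF1 β e - funF1 β x) / β ^ 2))) := by
          rw [show lam * Real.exp (β * x) *
              (2 * π * (Real.exp (-β * x) * ((funF1 β e - funF1 β x) / β ^ 2)))
              = (Real.exp (β * x) * Real.exp (-β * x)) *
                (2 * π * lam * ((funF1 β e - funF1 β x) / β ^ 2)) by ring, hE]
          field_simp
      _ ≤ _ := h
  have hSp2 : lam * Real.exp (β * x) * (∫ θ in (0:ℝ)..(2 * π), P θ)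
      ≤ 2 * π * lam / (3 * β) * (funF β x - funF β e) := by
    have h := mul_le_mul_of_nonneg_left hubint
      (le_of_lt (by positivity : 0 < lam * Real.exp (β * x)))
    rw [hubval] at h
    calc lam * Real.exp (β * x) * (∫ θ in (0:ℝ)..(2 * π), P θ)
        ≤ lam * Real.exp (β * x) *
          (Real.exp (-β * x) * (2 * π / (3 * β) * (funF β x - funF β e))) := h
      _ = 2 * π * lam / (3 * β) * (funF β x - funF β e) := by
          rw [show lam * Real.exp (β * x) *
              (Real.exp (-β * x) * (2 * π / (3 * β) * (funF β x - funF β e)))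
              = (Real.exp (β * x) * Real.exp (-β * x)) *
                (lam * (2 * π / (3 * β) * (funF β x - funF β e))) by ring, hE]
          ring
  constructor
  · apply Real.exp_le_exp.mpr
    apply sub_le_sub_left
    exact hSp2
  · apply Real.exp_le_exp.mpr
    apply sub_le_sub_left
    exact hSp1
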